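/- Entanglement test bound: let ω_{AB} be a density operator with Tr(Φ_{AB} ω_{AB}) ≥ 1 − ε for the maximally entangled state Φ_{AB} of Schmidt rank M and ε ∈ (0,1). Then for every σ_{AB} ∈ PPT'(A:B), D_max(ω_{AB}||σ_{AB}) ≥ log₂((1−ε)M); hence R_max(A;B)_ω := min_{σ ∈ PPT'} D_max(ω||σ) ≥ log₂((1−ε)M). -/

import Mathlib

open Matrix
open scoped ComplexOrder Classical

variable {ι : Type} [Fintype ι] [DecidableEq ι] [Nonempty ι]

/-- The max-relative entropy `D_max(ρ‖σ) = log₂ inf{λ ≥ 0 : ρ ≤ λσ}`, with value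
`+∞` if no such `λ` exists. -/
noncomputable def Dmax {n : Type} [Fintype n] [DecidableEq n]
    (ρ σ : Matrix n n ℂ) : EReal :=
  if _h : {l : ℝ | 0 ≤ l ∧ ((l : ℝ) • σ - ρ).PosSemidef}.Nonempty then
    ((Real.logb 2 (sInf {l : ℝ | 0 ≤ l ∧ ((l : ℝ) • σ - ρ).PosSemidef}) : ℝ) : EReal)
  else ⊤

/-- Partial transpose on the second (B) tensor factor. -/
def partialTransposeB (Q : Matrix (ι × ι) (ι × ι) ℂ) : Matrix (ι × ι) (ι × ι) ℂ :=
  Matrix.of fun p q => Q (p.1, q.2) (q.1, p.2)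

/-- The positive semidefinite square root (removed from Mathlib; old definition restored). -/
noncomputable def Matrix.PosSemidef.sqrt {n : Type} [Fintype n] [DecidableEq n]
    {A : Matrix n n ℂ} (hA : A.PosSemidef) : Matrix n n ℂ :=
  (hA.1.eigenvectorUnitary : Matrix n n ℂ) * diagonal ((↑) ∘ (√·) ∘ hA.1.eigenvalues) *
    (star hA.1.eigenvectorUnitary : Matrix n n ℂ)

/-- The trace norm `‖A‖₁ = Tr √(A†A)`. -/
noncomputable def traceNorm (A : Matrix (ι × ι) (ι × ι) ℂ) : ℝ :=
  ((Matrix.posSemidef_conjTranspose_mul_self A).sqrt).trace.re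

/-- The maximally entangled state `Φ = (1/M)|Υ⟩⟨Υ|` of Schmidt rank
`M = dim H_A = dim H_B`. -/
noncomputable def maxEntState : Matrix (ι × ι) (ι × ι) ℂ :=
  ((Fintype.card ι : ℂ))⁻¹ •
    Matrix.of fun p q => if p.1 = p.2 ∧ q.1 = q.2 then (1 : ℂ) else 0


/-! ### Auxiliary lemmas -/

section Aux

open scoped MatrixOrder in
lemma Matrix.PosSemidef.sqrt_eq_cfc' {n : Type} [Fintype n] [DecidableEq n]
    {A : Matrix n n ℂ} (hA : A.PosSemidef) : hA.sqrt = CFC.sqrt A := by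
  rw [CFC.sqrt_eq_real_sqrt A hA.nonneg, cfcₙ_eq_cfc, hA.1.cfc_eq, IsHermitian.cfc,
    Unitary.conjStarAlgAut_apply]
  rfl

open scoped MatrixOrder in
lemma Matrix.PosSemidef.sqrt_mul_self {n : Type} [Fintype n] [DecidableEq n]
    {A : Matrix n n ℂ} (hA : A.PosSemidef) : hA.sqrt * hA.sqrt = A := by
  rw [hA.sqrt_eq_cfc']
  exact CFC.sqrt_mul_sqrt_self A hA.nonneg

open scoped MatrixOrder in
lemma Matrix.PosSemidef.posSemidef_sqrt {n : Type} [Fintype n] [DecidableEq n]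
    {A : Matrix n n ℂ} (hA : A.PosSemidef) : hA.sqrt.PosSemidef := by
  rw [hA.sqrt_eq_cfc']
  exact nonneg_iff_posSemidef.mp (CFC.sqrt_nonneg A)

open scoped MatrixOrder in
lemma Matrix.PosSemidef.eq_sqrt_of_sq_eq {n : Type} [Fintype n] [DecidableEq n]
    {B : Matrix n n ℂ} (hB : B.PosSemidef) {A : Matrix n n ℂ} (hA : A.PosSemidef)
    (h : B ^ 2 = A) : B = hA.sqrt := by
  rw [hA.sqrt_eq_cfc']
  exact (CFC.sqrt_unique (by rw [← sq]; exact h) hB.nonneg).symm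

lemma trace_nonneg_of_psd' {n : Type} [Fintype n] {A : Matrix n n ℂ}
    (hA : A.PosSemidef) : 0 ≤ A.trace.re := by
  classical
  have hdiag : ∀ i, 0 ≤ A i i := by
    intro i
    exact hA.diag_nonneg
  have : (0:ℂ) ≤ A.trace := Finset.sum_nonneg fun i _ => hdiag i
  exact (Complex.le_def.mp this).1

lemma trace_mul_nonneg_of_psd' {n : Type} [Fintype n] [DecidableEq n]
    {A B : Matrix n n ℂ} (hA : A.PosSemidef) (hB : B.PosSemidef) :
    0 ≤ ((A * B).trace).re := by
  have h2 : (A * B).trace = (hA.sqrt * B * hA.sqrt).trace := by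
    rw [show A * B = hA.sqrt * (hA.sqrt * B) by rw [← mul_assoc, hA.sqrt_mul_self],
      trace_mul_comm]
  have hpsd : (hA.sqrt * B * hA.sqrt).PosSemidef := by
    have := hB.mul_mul_conjTranspose_same hA.sqrt
    rwa [hA.posSemidef_sqrt.isHermitian.eq] at this
  rw [h2]
  exact trace_nonneg_of_psd' hpsd

lemma psd_smul' {n : Type} [Fintype n] {A : Matrix n n ℂ} (hA : A.PosSemidef)
    {c : ℝ} (hc : 0 ≤ c) : ((c:ℂ) • A).PosSemidef := by
  refine ⟨?_, fun x => ?_⟩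
  · unfold Matrix.IsHermitian
    rw [conjTranspose_smul, hA.1.eq]
    simp
  · exact (hA.smul (show (0:ℂ) ≤ (c:ℂ) by exact_mod_cast hc)).2 x

/-- The swap (flip) operator on `H_A ⊗ H_B`. -/
noncomputable def swapF (ι : Type) [Fintype ι] [DecidableEq ι] : Matrix (ι × ι) (ι × ι) ℂ :=
  Matrix.of fun p q => if p.1 = q.2 ∧ p.2 = q.1 then (1:ℂ) else 0

set_option linter.unusedSectionVars false

lemma swapF_herm : (swapF ι).IsHermitian := by
  ext p q
  simp only [conjTranspose_apply, swapF, of_apply]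
  split_ifs with h1 h2 h2 <;> simp_all [eq_comm, and_comm]

lemma swapF_mul_self : swapF ι * swapF ι = 1 := by
  ext p q
  simp only [mul_apply, swapF, of_apply, one_apply]
  rw [Finset.sum_eq_single (p.2, p.1)]
  · simp [Prod.ext_iff, eq_comm, and_comm]
  · intro r _ hr
    simp only [ite_mul, one_mul, zero_mul]
    split_ifs with h1 h2
    · exact absurd (Prod.ext h1.2.symm h1.1.symm) hr
    · rfl
    · rfl
  · simp

lemma one_add_swapF_psd : ((1 : Matrix (ι×ι) (ι×ι) ℂ) + swapF ι).PosSemidef := by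
  have hherm : ((1 : Matrix (ι×ι) (ι×ι) ℂ) + swapF ι).IsHermitian :=
    Matrix.isHermitian_one.add swapF_herm
  have hsq : ((1 : Matrix (ι×ι) (ι×ι) ℂ) + swapF ι) * ((1 : Matrix (ι×ι) (ι×ι) ℂ) + swapF ι)
      = (2:ℂ) • ((1 : Matrix (ι×ι) (ι×ι) ℂ) + swapF ι) := by
    rw [add_mul, mul_add, mul_add, swapF_mul_self, one_mul, one_mul, mul_one, two_smul]
    abel
  have : ((1 : Matrix (ι×ι) (ι×ι) ℂ) + swapF ι)
      = (Complex.ofReal 2⁻¹) • (((1 : Matrix (ι×ι) (ι×ι) ℂ) + swapF ι)ᴴ * ((1 : Matrix (ι×ι) (ι×ι) ℂ) + swapF ι)) := by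
    rw [hherm.eq, hsq]
    rw [smul_smul]
    norm_num
  rw [this]
  exact psd_smul' (posSemidef_conjTranspose_mul_self ((1 : Matrix (ι×ι) (ι×ι) ℂ) + swapF ι)) (by norm_num : (0:ℝ) ≤ 2⁻¹)

lemma one_sub_swapF_psd : ((1 : Matrix (ι×ι) (ι×ι) ℂ) - swapF ι).PosSemidef := by
  have hherm : ((1 : Matrix (ι×ι) (ι×ι) ℂ) - swapF ι).IsHermitian :=
    Matrix.isHermitian_one.sub swapF_herm
  have hsq : ((1 : Matrix (ι×ι) (ι×ι) ℂ) - swapF ι) * ((1 : Matrix (ι×ι) (ι×ι) ℂ) - swapF ι)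
      = (2:ℂ) • ((1 : Matrix (ι×ι) (ι×ι) ℂ) - swapF ι) := by
    rw [sub_mul, mul_sub, mul_sub, swapF_mul_self, one_mul, one_mul, mul_one, two_smul]
    abel
  have : ((1 : Matrix (ι×ι) (ι×ι) ℂ) - swapF ι)
      = (Complex.ofReal 2⁻¹) • (((1 : Matrix (ι×ι) (ι×ι) ℂ) - swapF ι)ᴴ * ((1 : Matrix (ι×ι) (ι×ι) ℂ) - swapF ι)) := by
    rw [hherm.eq, hsq, smul_smul]
    norm_num
  rw [this]
  exact psd_smul' (posSemidef_conjTranspose_mul_self ((1 : Matrix (ι×ι) (ι×ι) ℂ) - swapF ι)) (by norm_num : (0:ℝ) ≤ 2⁻¹)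

lemma trace_swapF_mul_le (X : Matrix (ι×ι) (ι×ι) ℂ) (hX : X.IsHermitian) :
    ((swapF ι * X).trace).re ≤ traceNorm X := by
  set U : Matrix (ι×ι) (ι×ι) ℂ := (hX.eigenvectorUnitary : Matrix (ι×ι) (ι×ι) ℂ) with hU
  have hUU : star U * U = 1 := Matrix.UnitaryGroup.star_mul_self _
  set ev : (ι×ι) → ℝ := hX.eigenvalues with hev
  set Dp : Matrix (ι×ι) (ι×ι) ℂ := diagonal (fun i => ((max (ev i) 0 : ℝ) : ℂ)) with hDp
  set Dm : Matrix (ι×ι) (ι×ι) ℂ := diagonal (fun i => ((max (-ev i) 0 : ℝ) : ℂ)) with hDm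
  set Xp := U * Dp * star U with hXpdef
  set Xm := U * Dm * star U with hXmdef
  have hDppsd : Dp.PosSemidef := PosSemidef.diagonal fun i => by
    simpa using Complex.zero_le_real.mpr (le_max_right (ev i) 0)
  have hDmpsd : Dm.PosSemidef := PosSemidef.diagonal fun i => by
    simpa using Complex.zero_le_real.mpr (le_max_right (-ev i) 0)
  have hXp : Xp.PosSemidef := by
    have := hDppsd.mul_mul_conjTranspose_same U
    rwa [← star_eq_conjTranspose] at this
  have hXm : Xm.PosSemidef := by
    have := hDmpsd.mul_mul_conjTranspose_same U
    rwa [← star_eq_conjTranspose] at this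
  have hsplit : X = Xp - Xm := by
    have hD : diagonal (RCLike.ofReal ∘ ev) = Dp - Dm := by
      rw [hDp, hDm, diagonal_sub]
      refine congrArg Matrix.diagonal (funext fun i => ?_)
      simp only [Pi.sub_apply, Function.comp_apply]
      rw [show ((RCLike.ofReal (ev i)) : ℂ) = ((ev i : ℝ) : ℂ) from rfl, ← Complex.ofReal_sub]
      exact congrArg Complex.ofReal (max_zero_sub_max_neg_zero_eq_self (ev i)).symm
    calc X = U * diagonal (RCLike.ofReal ∘ ev) * star U := hX.spectral_theorem
    _ = Xp - Xm := by rw [hD, Matrix.mul_sub, Matrix.sub_mul]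
  have hPsq : (Xp + Xm) ^ 2 = Xᴴ * X := by
    have hDD : (Dp + Dm) * (Dp + Dm) =
        diagonal (RCLike.ofReal ∘ ev) * diagonal (RCLike.ofReal ∘ ev) := by
      rw [hDp, hDm, diagonal_add, diagonal_mul_diagonal, diagonal_mul_diagonal]
      refine congrArg Matrix.diagonal (funext fun i => ?_)
      simp only [Pi.add_apply, Function.comp_apply]
      rw [show ((RCLike.ofReal (ev i)) : ℂ) = ((ev i : ℝ) : ℂ) from rfl,
        ← Complex.ofReal_add, ← Complex.ofReal_mul, ← Complex.ofReal_mul]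
      have h : (ev i ⊔ 0 + -ev i ⊔ 0) * (ev i ⊔ 0 + -ev i ⊔ 0) = ev i * ev i := by
        rw [max_zero_add_max_neg_zero_eq_abs_self, abs_mul_abs_self]
      exact congrArg Complex.ofReal h
    have key : ∀ D1 D2 : Matrix (ι×ι) (ι×ι) ℂ,
        (U * D1 * star U) * (U * D2 * star U) = U * (D1 * D2) * star U := by
      intro D1 D2
      calc (U * D1 * star U) * (U * D2 * star U)
          = U * D1 * ((star U * U) * (D2 * star U)) := by simp only [Matrix.mul_assoc]
        _ = U * (D1 * D2) * star U := by rw [hUU]; simp only [Matrix.one_mul, Matrix.mul_assoc]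
    have h1 : Xp + Xm = U * (Dp + Dm) * star U := by
      rw [hXpdef, hXmdef, Matrix.mul_add, Matrix.add_mul]
    rw [sq, h1, key, hDD, ← key,
      ← (show X = U * diagonal (RCLike.ofReal ∘ ev) * star U from hX.spectral_theorem), hX.eq]
  have hPpsd : (Xp + Xm).PosSemidef := hXp.add hXm
  have hsqrt : Xp + Xm = (Matrix.posSemidef_conjTranspose_mul_self X).sqrt :=
    hPpsd.eq_sqrt_of_sq_eq _ hPsq
  have hb1 : ((swapF ι * Xp).trace).re ≤ (Xp.trace).re := by
    have h0 := trace_mul_nonneg_of_psd' (one_sub_swapF_psd (ι := ι)) hXp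
    rw [Matrix.sub_mul, Matrix.one_mul, trace_sub, Complex.sub_re] at h0
    linarith
  have hb2 : -((Xm.trace).re) ≤ ((swapF ι * Xm).trace).re := by
    have h0 := trace_mul_nonneg_of_psd' (one_add_swapF_psd (ι := ι)) hXm
    rw [Matrix.add_mul, Matrix.one_mul, trace_add, Complex.add_re] at h0
    linarith
  have hlin : ((swapF ι * X).trace).re
      = ((swapF ι * Xp).trace).re - ((swapF ι * Xm).trace).re := by
    rw [hsplit, Matrix.mul_sub, trace_sub, Complex.sub_re]
  have : traceNorm X = (Xp.trace).re + (Xm.trace).re := by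
    rw [traceNorm, ← hsqrt, trace_add, Complex.add_re]
  rw [hlin, this]
  linarith

lemma ptB_herm {σ : Matrix (ι × ι) (ι × ι) ℂ} (hσ : σ.IsHermitian) :
    (partialTransposeB σ).IsHermitian := by
  ext p q
  have := congrFun (congrFun hσ.eq (p.1, q.2)) (q.1, p.2)
  simpa [partialTransposeB, conjTranspose_apply] using this

lemma trace_maxEnt_mul (σ : Matrix (ι × ι) (ι × ι) ℂ) :
    (maxEntState * σ).trace = ((Fintype.card ι : ℂ))⁻¹ * ∑ i, ∑ j, σ (j,j) (i,i) := by
  rw [maxEntState, Matrix.smul_mul, trace_smul, smul_eq_mul]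
  congr 1
  rw [Matrix.trace]
  simp only [Matrix.diag, Matrix.mul_apply, of_apply, ite_mul, one_mul, zero_mul]
  rw [Fintype.sum_prod_type]
  simp [Fintype.sum_prod_type, ite_and, Finset.sum_ite_eq, Finset.sum_ite_eq']

lemma trace_swapF_ptB (σ : Matrix (ι × ι) (ι × ι) ℂ) :
    (swapF ι * partialTransposeB σ).trace = ∑ i, ∑ j, σ (j,j) (i,i) := by
  rw [Matrix.trace]
  simp only [Matrix.diag, Matrix.mul_apply, swapF, partialTransposeB, of_apply,
    ite_mul, one_mul, zero_mul]
  rw [Fintype.sum_prod_type]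
  simp [Fintype.sum_prod_type, ite_and, Finset.sum_ite_eq, Finset.sum_ite_eq']

lemma maxEntState_psd : (maxEntState (ι := ι)).PosSemidef := by
  have hB : (Matrix.of fun (p q : ι × ι) => if p.1 = p.2 ∧ q.1 = q.2 then (1 : ℂ) else 0)
      = (Matrix.of fun (_ : Unit) (p : ι × ι) => if p.1 = p.2 then (1:ℂ) else 0)ᴴ
        * (Matrix.of fun (_ : Unit) (p : ι × ι) => if p.1 = p.2 then (1:ℂ) else 0) := by
    ext p q
    simp only [Matrix.mul_apply, conjTranspose_apply, of_apply, Finset.univ_unique,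
      Finset.sum_singleton]
    split_ifs <;> simp_all
  have hc : ((Fintype.card ι : ℂ))⁻¹ = (((Fintype.card ι : ℝ)⁻¹ : ℝ) : ℂ) := by
    push_cast; ring
  rw [maxEntState, hB, hc]
  exact psd_smul' (posSemidef_conjTranspose_mul_self _) (by positivity)

end Aux

/-- Entanglement test bound: if a density operator `ω` passes the entanglement
test with probability at least `1 − ε`, i.e. `Tr(Φ ω) ≥ 1 − ε`, then for every
`σ ∈ PPT'(A:B)`, `D_max(ω‖σ) ≥ log₂((1−ε)M)`; hence
`R_max(A;B)_ω = min_{σ ∈ PPT'} D_max(ω‖σ) ≥ log₂((1−ε)M)`. -/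
theorem Dmax_ge_of_entanglement_test (ω : Matrix (ι × ι) (ι × ι) ℂ)
    (hω : ω.PosSemidef) (hωtr : ω.trace = 1) (ε : ℝ) (hε : ε ∈ Set.Ioo (0:ℝ) 1)
    (htest : 1 - ε ≤ ((maxEntState * ω).trace).re) :
    ∀ σ : Matrix (ι × ι) (ι × ι) ℂ, σ.PosSemidef →
      traceNorm (partialTransposeB σ) ≤ 1 →
      ((Real.logb 2 ((1 - ε) * (Fintype.card ι : ℝ)) : ℝ) : EReal) ≤ Dmax ω σ := by
  intro σ hσ hppt
  have hM : (0:ℝ) < (Fintype.card ι : ℝ) := by exact_mod_cast Fintype.card_pos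
  have hσΦ : ((maxEntState * σ).trace).re ≤ (Fintype.card ι : ℝ)⁻¹ := by
    have e1 : (maxEntState * σ).trace
        = ((Fintype.card ι : ℝ)⁻¹ : ℂ) * (swapF ι * partialTransposeB σ).trace := by
      rw [trace_maxEnt_mul, trace_swapF_ptB]
      congr 1
    rw [e1]
    rw [← Complex.ofReal_inv, Complex.re_ofReal_mul]
    calc (Fintype.card ι : ℝ)⁻¹ * ((swapF ι * partialTransposeB σ).trace).re
        ≤ (Fintype.card ι : ℝ)⁻¹ * traceNorm (partialTransposeB σ) := by
          exact mul_le_mul_of_nonneg_left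
            (trace_swapF_mul_le (partialTransposeB σ) (ptB_herm hσ.1)) (by positivity)
      _ ≤ (Fintype.card ι : ℝ)⁻¹ * 1 := by
          exact mul_le_mul_of_nonneg_left hppt (by positivity)
      _ = (Fintype.card ι : ℝ)⁻¹ := mul_one _
  have key : ∀ l ∈ {l : ℝ | 0 ≤ l ∧ ((l : ℝ) • σ - ω).PosSemidef},
      (1 - ε) * (Fintype.card ι : ℝ) ≤ l := by
    rintro l ⟨hl0, hlpsd⟩
    have hsm : (l : ℝ) • σ = ((l:ℝ) : ℂ) • σ := by
      ext p q
      simp [Complex.real_smul]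
    rw [hsm] at hlpsd
    have h0 := trace_mul_nonneg_of_psd' (maxEntState_psd (ι := ι)) hlpsd
    rw [Matrix.mul_sub, Matrix.mul_smul, trace_sub, trace_smul, Complex.sub_re,
      smul_eq_mul, show (((l:ℝ)) : ℂ) = Complex.ofReal l from rfl,
      Complex.re_ofReal_mul] at h0
    have h1 : 1 - ε ≤ l * (Fintype.card ι : ℝ)⁻¹ := by
      have := mul_le_mul_of_nonneg_left hσΦ hl0
      linarith
    have := mul_le_mul_of_nonneg_right h1 (le_of_lt hM)
    rw [mul_assoc, inv_mul_cancel₀ (ne_of_gt hM), mul_one] at this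
    exact this
  rw [Dmax]
  split_ifs with h
  · rw [EReal.coe_le_coe_iff]
    refine Real.logb_le_logb_of_le one_lt_two ?_ (le_csInf h key)
    have h1ε : (0:ℝ) < 1 - ε := by linarith [hε.2]
    positivity
  · exact le_top
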